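/- If f ∈ L²(ℝ) has support in [-1,1] and f, viewed as an element of L²(ℝ), is not continuous at 1 or -1 (i.e. does not vanish at the endpoints in the H¹ sense), then the variance V(f) = ∫ y² |F(f)(y)|² dy is infinite. -/

import Mathlib

open MeasureTheory Real Set Filter
open scoped FourierTransform ContDiff

section Helpers

open Complex

private lemma inner_mul' (x y : ℝ) : (innerₗ ℝ) x y = x * y := by
  rw [show ((innerₗ ℝ) x) y = inner ℝ x y from rfl]; simp [RCLike.inner_apply, mul_comm]

private lemma hLcont' : Continuous fun p : ℝ × ℝ => innerₗ ℝ p.1 p.2 := by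
  simp only [inner_mul']; exact continuous_mul

private lemma fourier_cont' {h : ℝ → ℂ} (hh : Integrable h) : Continuous (𝓕 h) :=
  VectorFourier.fourierIntegral_continuous Real.continuous_fourierChar hLcont' hh

private lemma fourier_norm_le' (h : ℝ → ℂ) (ξ : ℝ) : ‖𝓕 h ξ‖ ≤ ∫ x, ‖h x‖ :=
  VectorFourier.norm_fourierIntegral_le_integral_norm _ _ _ _ _

private lemma innerflip' : (innerₗ ℝ).flip = innerₗ ℝ := by
  apply LinearMap.ext; intro x; apply LinearMap.ext; intro y
  simp only [LinearMap.flip_apply, inner_mul', mul_comm]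

private lemma mult' (h g : ℝ → ℂ) (hh : Integrable h) (hg : Integrable g) :
    ∫ ξ, 𝓕 h ξ * g ξ = ∫ x, h x * 𝓕 g x := by
  have := VectorFourier.integral_fourierIntegral_smul_eq_flip (F := ℂ)
    (e := Real.fourierChar) (L := innerₗ ℝ) (μ := volume) (ν := volume)
    Real.continuous_fourierChar hLcont' hh hg
  simp only [innerflip', smul_eq_mul] at this; exact this

private lemma negflip' : (-innerₗ ℝ).flip = -innerₗ ℝ := by
  apply LinearMap.ext; intro x; apply LinearMap.ext; intro y
  simp only [LinearMap.flip_apply, LinearMap.neg_apply, inner_mul', mul_comm]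

private lemma multInv' (h g : ℝ → ℂ) (hh : Integrable h) (hg : Integrable g) :
    ∫ ξ, 𝓕⁻ h ξ * g ξ = ∫ x, h x * 𝓕⁻ g x := by
  have hL : Continuous fun p : ℝ × ℝ => (-innerₗ ℝ) p.1 p.2 := by
    simp only [LinearMap.neg_apply, inner_mul']
    exact continuous_mul.neg
  have := VectorFourier.integral_fourierIntegral_smul_eq_flip (F := ℂ)
    (e := Real.fourierChar) (L := -innerₗ ℝ) (μ := volume) (ν := volume)
    Real.continuous_fourierChar hL hh hg
  simp only [negflip', smul_eq_mul] at this; exact this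

private lemma test_fourier_integrable' (ψ : ℝ → ℂ) (hψ : ContDiff ℝ ∞ ψ)
    (hs : HasCompactSupport ψ) : Integrable (𝓕 ψ) := by
  have hc : Continuous ψ := hψ.continuous
  have hint : Integrable ψ := hc.integrable_of_hasCompactSupport hs
  have hd : Differentiable ℝ ψ := hψ.differentiable (by simp)
  have hψ' : ContDiff ℝ ∞ (deriv ψ) := (contDiff_infty_iff_deriv.mp hψ).2
  have hs' : HasCompactSupport (deriv ψ) := hs.deriv
  have hint' : Integrable (deriv ψ) := hψ'.continuous.integrable_of_hasCompactSupport hs'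
  have hd' : Differentiable ℝ (deriv ψ) := hψ'.differentiable (by simp)
  have hs'' : HasCompactSupport (deriv (deriv ψ)) := hs'.deriv
  have hint'' : Integrable (deriv (deriv ψ)) :=
    ((contDiff_infty_iff_deriv.mp hψ').2).continuous.integrable_of_hasCompactSupport hs''
  have h1 : 𝓕 (deriv (deriv ψ)) = fun x : ℝ => (2 * π * I * x) • ((2 * π * I * x) • 𝓕 ψ x) := by
    rw [Real.fourier_deriv hint' hd' hint'', Real.fourier_deriv hint hd hint']
  set B : ℝ := (∫ x, ‖ψ x‖) + (2 * π * (2 * π))⁻¹ * ∫ x, ‖deriv (deriv ψ) x‖ with hB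
  have key : ∀ ξ : ℝ, ‖𝓕 ψ ξ‖ ≤ B * (1 + ξ ^ 2)⁻¹ := by
    intro ξ
    have hb1 : ‖𝓕 ψ ξ‖ ≤ ∫ x, ‖ψ x‖ := fourier_norm_le' ψ ξ
    have hb2 : 2 * π * (2 * π) * (ξ ^ 2 * ‖𝓕 ψ ξ‖) ≤ ∫ x, ‖deriv (deriv ψ) x‖ := by
      have h2 := fourier_norm_le' (deriv (deriv ψ)) ξ
      rw [h1] at h2
      have hnrm : ‖(2 * ↑π * I * ↑ξ) • ((2 * ↑π * I * ↑ξ) • 𝓕 ψ ξ)‖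
          = 2 * π * (2 * π) * (ξ ^ 2 * ‖𝓕 ψ ξ‖) := by
        simp [norm_smul, Complex.norm_I]
        ring_nf
        rw [_root_.sq_abs, _root_.sq_abs]
        ring
      rwa [hnrm] at h2
    have hpos : (0:ℝ) < 1 + ξ ^ 2 := by positivity
    rw [show B * (1 + ξ ^ 2)⁻¹ = B / (1 + ξ ^ 2) by ring, le_div_iff₀ hpos]
    have hπ : (0:ℝ) < π := pi_pos
    have hn : (0:ℝ) ≤ ‖𝓕 ψ ξ‖ := norm_nonneg _
    rw [hB]
    have h4 : ξ ^ 2 * ‖𝓕 ψ ξ‖ ≤ (2 * π * (2 * π))⁻¹ * ∫ x, ‖deriv (deriv ψ) x‖ := by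
      rw [inv_mul_eq_div, le_div_iff₀ (by positivity)]
      linarith [hb2]
    nlinarith [sq_nonneg ξ]
  have hmaj : Integrable (fun ξ : ℝ => B * (1 + ξ ^ 2)⁻¹) := integrable_inv_one_add_sq.const_mul B
  exact hmaj.mono' (fourier_cont' hint).aestronglyMeasurable (Filter.Eventually.of_forall key)

private lemma boundary_zero {g : ℝ → ℂ} (hg : Continuous g) {a b : ℝ} (hab : a < b)
    (h : ∀ᵐ x : ℝ, x ∈ Ioo a b → g x = 0) : g a = 0 := by
  by_contra hga
  have hopen : IsOpen (g ⁻¹' {(0:ℂ)}ᶜ) := isOpen_compl_singleton.preimage hg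
  obtain ⟨ε, εpos, hε⟩ := Metric.isOpen_iff.1 hopen a hga
  set c := min b (a + ε) with hc
  have hac : a < c := lt_min hab (by linarith)
  have hsub : Ioo a c ⊆ {x | ¬ (x ∈ Ioo a b → g x = 0)} := by
    intro x hx
    simp only [mem_setOf_eq, Classical.not_imp]
    refine ⟨⟨hx.1, lt_of_lt_of_le hx.2 (min_le_left _ _)⟩, ?_⟩
    have hxb : x ∈ Metric.ball a ε := by
      rw [Real.ball_eq_Ioo]
      exact ⟨by linarith [hx.1], lt_of_lt_of_le hx.2 (min_le_right _ _)⟩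
    exact hε hxb
  have h0 : volume (Ioo a c) = 0 := measure_mono_null hsub (ae_iff.mp h)
  rw [Real.volume_Ioo] at h0
  have : c - a ≤ 0 := by simpa using (ENNReal.ofReal_eq_zero.mp h0)
  linarith

private lemma boundary_zero' {g : ℝ → ℂ} (hg : Continuous g) {a b : ℝ} (hab : a < b)
    (h : ∀ᵐ x : ℝ, x ∈ Ioo a b → g x = 0) : g b = 0 := by
  have hg' : Continuous (fun x : ℝ => g (-x)) := hg.comp continuous_neg
  have h' : ∀ᵐ x : ℝ, x ∈ Ioo (-b) (-a) → g (-x) = 0 := by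
    have hmap : Measure.map (Neg.neg : ℝ → ℝ) volume = volume :=
      (Measure.measurePreserving_neg _).map_eq
    have hemb : MeasurableEmbedding (Neg.neg : ℝ → ℝ) :=
      (Homeomorph.neg ℝ).measurableEmbedding
    rw [← hmap] at h
    rw [hemb.ae_map_iff] at h
    filter_upwards [h] with x hx hmem
    exact hx ⟨by linarith [hmem.2], by linarith [hmem.1]⟩
  have := boundary_zero hg' (by linarith : -b < -a) h'
  simpa using this

end Helpers

/-- Fourier transform with the paper's convention
`F(f)(y) = (1/√(2π)) ∫ f(x) e^{ixy} dx`. -/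
noncomputable def FT (f : ℝ → ℂ) (y : ℝ) : ℂ :=
  ((1 / Real.sqrt (2 * Real.pi) : ℝ) : ℂ) *
    ∫ x : ℝ, f x * Complex.exp (Complex.I * x * y)

private lemma FT_eq (f : ℝ → ℂ) (y : ℝ) :
    FT f y = ((1 / Real.sqrt (2 * π) : ℝ) : ℂ) * 𝓕 f (-(2 * π)⁻¹ * y) := by
  rw [FT, Real.fourier_real_eq_integral_exp_smul]
  congr 1
  refine integral_congr_ae (Eventually.of_forall fun v => ?_)
  simp only []
  have harg : (-2) * π * v * (-(2 * π)⁻¹ * y) = v * y := by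
    field_simp
  rw [show ((-2 * π * v * (-(2 * π)⁻¹ * y) : ℝ) : ℂ) = ((v * y : ℝ) : ℂ) from by rw [harg],
    Complex.ofReal_mul]
  rw [smul_eq_mul]
  rw [show Complex.I * v * y = (v : ℂ) * y * Complex.I by ring]
  ring

private lemma FT_normsq (f : ℝ → ℂ) (y : ℝ) :
    ‖FT f y‖ ^ 2 = (2 * π)⁻¹ * ‖𝓕 f (-(2 * π)⁻¹ * y)‖ ^ 2 := by
  rw [FT_eq, norm_mul, mul_pow]
  have h0 : ‖((1 / Real.sqrt (2 * π) : ℝ) : ℂ)‖ = 1 / Real.sqrt (2 * π) := by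
    rw [Complex.norm_real, Real.norm_eq_abs, _root_.abs_of_nonneg (by positivity)]
  rw [h0, div_pow, one_pow, Real.sq_sqrt (by positivity : (0:ℝ) ≤ 2 * π), one_div]

theorem stmt_7 (f : ℝ → ℂ) (hf : MemLp f 2 (volume : Measure ℝ))
    (hsupp : Function.support f ⊆ Set.Icc (-1) 1)
    (hdisc : ¬ ∃ g : ℝ → ℂ, Continuous g ∧ f =ᵐ[volume] g ∧ g (-1) = 0 ∧ g 1 = 0) :
    ∫⁻ y : ℝ, ENNReal.ofReal (y ^ 2 * ‖FT f y‖ ^ 2) = ⊤ := by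
  by_contra hfin
  have hzero : ∀ x : ℝ, x ∉ Icc (-1:ℝ) 1 → f x = 0 := fun x hx =>
    Function.notMem_support.mp (fun hmem => hx (hsupp hmem))
  have hf1 : Integrable f := by
    have h1 : MemLp f 1 volume :=
      hf.mono_exponent_of_measure_support_ne_top hzero
        (by rw [Real.volume_Icc]; exact ENNReal.ofReal_ne_top) (by norm_num)
    exact memLp_one_iff_integrable.mp h1
  have h𝓕c : Continuous (𝓕 f) := fourier_cont' hf1
  set G : ℝ → ENNReal := fun ξ => ENNReal.ofReal (ξ ^ 2 * ‖𝓕 f ξ‖ ^ 2) with hG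
  have hGmeas : Measurable G :=
    ENNReal.measurable_ofReal.comp
      ((measurable_id.pow_const 2).mul ((h𝓕c.measurable.norm).pow_const 2))
  set a : ℝ := -(2 * π)⁻¹ with ha
  have ha0 : a ≠ 0 := neg_ne_zero.mpr (inv_ne_zero (by positivity))
  have hpt : ∀ y : ℝ, ENNReal.ofReal (y ^ 2 * ‖FT f y‖ ^ 2)
      = ENNReal.ofReal (2 * π) * G (a * y) := by
    intro y
    rw [hG, ← ENNReal.ofReal_mul (by positivity)]
    congr 1
    rw [FT_normsq, ha]
    field_simp
  have hSfin : ∫⁻ ξ, G ξ ≠ ⊤ := by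
    intro hS
    apply hfin
    have hcomp : ∫⁻ y, G (a * y) = ENNReal.ofReal |a⁻¹| * ∫⁻ ξ, G ξ := by
      rw [← lintegral_map hGmeas (measurable_const_mul a),
        Real.map_volume_mul_left ha0, lintegral_smul_measure, smul_eq_mul]
    have hEq : ∫⁻ y : ℝ, ENNReal.ofReal (y ^ 2 * ‖FT f y‖ ^ 2)
        = ENNReal.ofReal (2 * π) * (ENNReal.ofReal |a⁻¹| * ∫⁻ ξ, G ξ) := by
      rw [lintegral_congr hpt, lintegral_const_mul' _ _ ENNReal.ofReal_ne_top, hcomp]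
    rw [hEq, hS, ENNReal.mul_top, ENNReal.mul_top]
    · simp only [ne_eq, ENNReal.ofReal_eq_zero, not_le]
      positivity
    · simp only [ne_eq, ENNReal.ofReal_eq_zero, not_le, ha]
      simp only [inv_neg, inv_inv, abs_neg, abs_of_nonneg (by positivity : (0:ℝ) ≤ 2 * π)]
      positivity
  have hW : Integrable (fun ξ : ℝ => ξ ^ 2 * ‖𝓕 f ξ‖ ^ 2) := by
    refine ⟨((continuous_pow 2).mul ((h𝓕c.norm).pow 2)).aestronglyMeasurable, ?_⟩
    rw [hasFiniteIntegral_iff_ofReal (ae_of_all _ fun ξ => by positivity)]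
    exact lt_top_iff_ne_top.mpr hSfin
  have h𝓕int : Integrable (𝓕 f) := by
    have hmaj : Integrable (fun ξ : ℝ => 2 * (1 + ξ ^ 2)⁻¹ + ξ ^ 2 * ‖𝓕 f ξ‖ ^ 2) :=
      (integrable_inv_one_add_sq.const_mul 2).add hW
    have hsetm : MeasurableSet {x : ℝ | 1 ≤ |x|} :=
      (isClosed_le continuous_const continuous_abs).measurableSet
    have hout : IntegrableOn (𝓕 f) {x : ℝ | 1 ≤ |x|} := by
      refine (hmaj.integrableOn).mono' h𝓕c.aestronglyMeasurable.restrict ?_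
      rw [ae_restrict_iff' hsetm]
      refine Eventually.of_forall fun x hx => ?_
      simp only [mem_setOf_eq] at hx
      have hx2 : 1 ≤ x ^ 2 := by nlinarith [sq_abs x, abs_nonneg x]
      have hx2pos : (0:ℝ) < x ^ 2 := lt_of_lt_of_le one_pos hx2
      have hn : (0:ℝ) ≤ ‖𝓕 f x‖ := norm_nonneg _
      rcases le_or_gt ‖𝓕 f x‖ ((x ^ 2)⁻¹) with h | h
      · have h1 : (x ^ 2)⁻¹ ≤ 2 * (1 + x ^ 2)⁻¹ := by
          rw [inv_eq_one_div, inv_eq_one_div, mul_one_div,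
            div_le_div_iff₀ hx2pos (by positivity)]
          nlinarith
        have h2 : (0:ℝ) ≤ x ^ 2 * ‖𝓕 f x‖ ^ 2 := by positivity
        linarith
      · have h3 : 1 < x ^ 2 * ‖𝓕 f x‖ := by
          rw [← mul_inv_cancel₀ (ne_of_gt hx2pos)]
          exact (mul_lt_mul_iff_right₀ hx2pos).mpr h
        have h4 : (0:ℝ) ≤ ‖𝓕 f x‖ * (x ^ 2 * ‖𝓕 f x‖ - 1) :=
          mul_nonneg hn (sub_nonneg.mpr h3.le)
        have h1 : ‖𝓕 f x‖ ≤ x ^ 2 * ‖𝓕 f x‖ ^ 2 := by nlinarith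
        have h2 : (0:ℝ) ≤ 2 * (1 + x ^ 2)⁻¹ := by positivity
        linarith
    have hin : IntegrableOn (𝓕 f) (Icc (-1:ℝ) 1) := h𝓕c.integrableOn_Icc
    have hun : IntegrableOn (𝓕 f) (Icc (-1:ℝ) 1 ∪ {x : ℝ | 1 ≤ |x|}) := hin.union hout
    rw [← integrableOn_univ]
    refine hun.mono_set fun x _ => ?_
    rcases le_or_gt |x| 1 with h | h
    · exact Or.inl ⟨(abs_le.mp h).1, (abs_le.mp h).2⟩
    · exact Or.inr h.le
  set g : ℝ → ℂ := 𝓕⁻ (𝓕 f) with hgdef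
  have hgc : Continuous g := by
    have hrw : g = fun w => 𝓕 (𝓕 f) (-w) :=
      funext fun w => Real.fourierInv_eq_fourier_neg _ _
    rw [hrw]; exact (fourier_cont' h𝓕int).comp continuous_neg
  have hae : f =ᵐ[volume] g := by
    apply ae_eq_of_integral_contDiff_smul_eq hf1.locallyIntegrable hgc.locallyIntegrable
    intro φ hφ hφs
    set ψ : ℝ → ℂ := fun x => (φ x : ℂ) with hψdef
    have hψcd : ContDiff ℝ ∞ ψ := Complex.ofRealCLM.contDiff.comp hφ
    have hψs : HasCompactSupport ψ := hφs.comp_left (g := Complex.ofReal) rfl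
    have hψc : Continuous ψ := hψcd.continuous
    have hψint : Integrable ψ := hψc.integrable_of_hasCompactSupport hψs
    have h𝓕ψ : Integrable (𝓕 ψ) := test_fourier_integrable' ψ hψcd hψs
    have h𝓕invψ : Integrable (𝓕⁻ ψ) := by
      have hrw : (𝓕⁻ ψ) = fun w => 𝓕 ψ (-w) :=
        funext fun w => Real.fourierInv_eq_fourier_neg _ _
      rw [hrw]; exact h𝓕ψ.comp_neg
    have hinv : 𝓕 (𝓕⁻ ψ) = ψ := hψc.fourier_fourierInv_eq hψint h𝓕ψ
    have e1 : ∫ x, g x * ψ x = ∫ x, 𝓕 f x * 𝓕⁻ ψ x := multInv' (𝓕 f) ψ h𝓕int hψint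
    have e2 : ∫ x, 𝓕 f x * 𝓕⁻ ψ x = ∫ x, f x * ψ x := by
      rw [mult' f (𝓕⁻ ψ) hf1 h𝓕invψ, hinv]
    calc ∫ x, φ x • f x = ∫ x, f x * ψ x := by
          refine integral_congr_ae (Eventually.of_forall fun x => ?_)
          simp [hψdef, Complex.real_smul, mul_comm]
      _ = ∫ x, 𝓕 f x * 𝓕⁻ ψ x := e2.symm
      _ = ∫ x, g x * ψ x := e1.symm
      _ = ∫ x, φ x • g x := by
          refine integral_congr_ae (Eventually.of_forall fun x => ?_)
          simp [hψdef, Complex.real_smul, mul_comm]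
  have hnull : ∀ᵐ x : ℝ, x ∉ Icc (-1:ℝ) 1 → g x = 0 := by
    filter_upwards [hae] with x hx hmem
    rw [← hx]; exact hzero x hmem
  have hg1 : g 1 = 0 := by
    refine boundary_zero hgc (show (1:ℝ) < 2 by norm_num) ?_
    filter_upwards [hnull] with x hx hmem
    exact hx (fun hc => absurd hmem.1 (not_lt.mpr hc.2))
  have hgm1 : g (-1) = 0 := by
    refine boundary_zero' hgc (show (-2:ℝ) < -1 by norm_num) ?_
    filter_upwards [hnull] with x hx hmem
    exact hx (fun hc => absurd hmem.2 (not_lt.mpr hc.1))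
  exact hdisc ⟨g, hgc, hae, hgm1, hg1⟩
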